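/- Let V₁,…,V_N ∈ ℝ^{m×n} and D₁,…,D_N ∈ ℝ^{m×n} satisfy ‖D_i‖ ≤ 1 and ⟨V_i, D_i⟩ = ‖V_i‖_* for each i. Let V̄ := (1/N)∑_{i=1}^N V_i and D̄ := (1/N)∑_{i=1}^N D_i. Then for every G ∈ ℝ^{m×n}, −⟨V̄, D̄⟩ ≤ −‖G‖_* + ‖G − V̄‖_* + (2/N)∑_{i=1}^N ‖V̄ − V_i‖_*. -/

import Mathlib

open Matrix Kronecker

/-- Spectral norm: ℓ²→ℓ² operator norm of a real matrix. -/
noncomputable def specNorm {ι κ : Type*} [Fintype ι] [Fintype κ] [DecidableEq κ]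
    (A : Matrix ι κ ℝ) : ℝ :=
  ‖LinearMap.toContinuousLinearMap (Matrix.toEuclideanLin A)‖

/-- Nuclear norm: trace of the positive semidefinite square root of `Aᵀ * A`. -/
noncomputable def nucNorm {ι κ : Type*} [Fintype ι] [Fintype κ] [DecidableEq κ]
    (A : Matrix ι κ ℝ) : ℝ :=
  Matrix.trace ((Matrix.posSemidef_conjTranspose_mul_self A).1.eigenvectorUnitary.1 *
    diagonal ((↑) ∘ (Real.sqrt ∘ (Matrix.posSemidef_conjTranspose_mul_self A).1.eigenvalues)) *
    (star (Matrix.posSemidef_conjTranspose_mul_self A).1.eigenvectorUnitary : Matrix κ κ ℝ))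

/-- Frobenius norm. -/
noncomputable def frobNorm {ι κ : Type*} [Fintype ι] [Fintype κ] (A : Matrix ι κ ℝ) : ℝ :=
  Real.sqrt (∑ i, ∑ j, (A i j) ^ 2)

/-- Trace inner product `⟨A, B⟩ = trace (Aᵀ B)`. -/
noncomputable def tin {ι κ : Type*} [Fintype ι] [Fintype κ] (A B : Matrix ι κ ℝ) : ℝ :=
  Matrix.trace (Aᵀ * B)

/-- Vertical stacking of `N` matrices of size `m × n`. -/
def vstack {N m n : ℕ} (Y : Fin N → Matrix (Fin m) (Fin n) ℝ) :
    Matrix (Fin N × Fin m) (Fin n) ℝ :=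
  fun p j => Y p.1 p.2 j

section Aux
variable {ι κ : Type*} [Fintype ι] [Fintype κ] [DecidableEq κ]

lemma my_svd_package (A : Matrix ι κ ℝ) :
    ∃ (U : Matrix κ κ ℝ) (μ : κ → ℝ),
      star U * U = 1 ∧ U * star U = 1 ∧ (∀ k, 0 ≤ μ k) ∧
      nucNorm A = ∑ k, μ k ∧
      star U * (Aᵀ * A) * U = Matrix.diagonal (fun k => μ k ^ 2) := by
  have hpsd := Matrix.posSemidef_conjTranspose_mul_self A
  have hU1 := Matrix.mem_unitaryGroup_iff'.mp (Matrix.posSemidef_conjTranspose_mul_self A).1.eigenvectorUnitary.2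
  refine ⟨((Matrix.posSemidef_conjTranspose_mul_self A).1.eigenvectorUnitary : Matrix κ κ ℝ),
    fun k => Real.sqrt ((Matrix.posSemidef_conjTranspose_mul_self A).1.eigenvalues k), hU1,
    Matrix.mem_unitaryGroup_iff.mp (Matrix.posSemidef_conjTranspose_mul_self A).1.eigenvectorUnitary.2,
    fun k => Real.sqrt_nonneg _, ?_, ?_⟩
  · rw [nucNorm, Matrix.trace_mul_cycle, hU1, Matrix.one_mul, Matrix.trace_diagonal]
    simp
  · have h := Matrix.IsHermitian.conjStarAlgAut_star_eigenvectorUnitary (Matrix.posSemidef_conjTranspose_mul_self A).1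
    simp only [Unitary.conjStarAlgAut_apply, star_star, Unitary.coe_star] at h
    rw [← Matrix.conjTranspose_eq_transpose_of_trivial, h]
    congr 1
    funext k
    simp only [Function.comp_apply, RCLike.ofReal_real_eq_id, id]
    exact (Real.sq_sqrt (Matrix.PosSemidef.eigenvalues_nonneg (Matrix.posSemidef_conjTranspose_mul_self A) k)).symm

lemma my_specNorm_nonneg (A : Matrix ι κ ℝ) : 0 ≤ specNorm A := norm_nonneg _

lemma my_nucNorm_nonneg (A : Matrix ι κ ℝ) : 0 ≤ nucNorm A := by
  obtain ⟨U, μ, _, _, hμ, hnuc, _⟩ := my_svd_package A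
  rw [hnuc]
  exact Finset.sum_nonneg fun k _ => hμ k

lemma my_specNorm_neg (A : Matrix ι κ ℝ) : specNorm (-A) = specNorm A := by
  unfold specNorm
  rw [map_neg, map_neg, norm_neg]

lemma my_mulVec_sq_le (A : Matrix ι κ ℝ) (x : κ → ℝ) :
    ∑ i, (A *ᵥ x) i ^ 2 ≤ specNorm A ^ 2 * ∑ j, x j ^ 2 := by
  have h := (LinearMap.toContinuousLinearMap (Matrix.toEuclideanLin A)).le_opNorm
      ((WithLp.equiv 2 (κ → ℝ)).symm x)
  have h1 : ‖LinearMap.toContinuousLinearMap (Matrix.toEuclideanLin A)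
      ((WithLp.equiv 2 (κ → ℝ)).symm x)‖ = Real.sqrt (∑ i, (A *ᵥ x) i ^ 2) := by
    rw [LinearMap.coe_toContinuousLinearMap', Matrix.toEuclideanLin_apply,
      EuclideanSpace.norm_eq]
    simp [sq_abs]
  have h2 : ‖((WithLp.equiv 2 (κ → ℝ)).symm x)‖ = Real.sqrt (∑ j, x j ^ 2) := by
    rw [EuclideanSpace.norm_eq]
    simp [sq_abs]
  rw [h1, h2] at h
  have ha : 0 ≤ ∑ i, (A *ᵥ x) i ^ 2 := Finset.sum_nonneg fun _ _ => sq_nonneg _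
  have hb : 0 ≤ ∑ j, x j ^ 2 := Finset.sum_nonneg fun _ _ => sq_nonneg _
  calc ∑ i, (A *ᵥ x) i ^ 2 = Real.sqrt (∑ i, (A *ᵥ x) i ^ 2) ^ 2 := (Real.sq_sqrt ha).symm
    _ ≤ (specNorm A * Real.sqrt (∑ j, x j ^ 2)) ^ 2 := by
        apply pow_le_pow_left₀ (Real.sqrt_nonneg _) h
    _ = specNorm A ^ 2 * ∑ j, x j ^ 2 := by rw [mul_pow, Real.sq_sqrt hb]

lemma my_conj_group (A B : Matrix ι κ ℝ) (U : Matrix κ κ ℝ) :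
    star U * (Aᵀ * B) * U = (A * U)ᵀ * (B * U) := by
  rw [Matrix.transpose_mul, Matrix.star_eq_conjTranspose,
    Matrix.conjTranspose_eq_transpose_of_trivial, ← Matrix.mul_assoc Uᵀ Aᵀ B,
    Matrix.mul_assoc]

lemma my_trace_conj (M U : Matrix κ κ ℝ) (hU2 : U * star U = 1) :
    Matrix.trace (star U * M * U) = Matrix.trace M := by
  rw [Matrix.trace_mul_cycle, hU2, Matrix.one_mul]

/-- Hölder / duality inequality for the trace pairing. -/
lemma my_tin_le (A B : Matrix ι κ ℝ) : tin A B ≤ nucNorm A * specNorm B := by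
  obtain ⟨U, μ, hU1, hU2, hμ, hnuc, hAA⟩ := my_svd_package A
  have htin : tin A B = ∑ k, ∑ j, (A * U) j k * (B * U) j k := by
    have := my_trace_conj (Aᵀ * B) U hU2
    rw [my_conj_group] at this
    rw [tin, ← this]
    simp [Matrix.trace, Matrix.diag, Matrix.mul_apply, mul_comm]
  have hcolA : ∀ k, ∑ j, (A * U) j k ^ 2 = μ k ^ 2 := by
    intro k
    have := congrFun (congrFun ((my_conj_group A A U).symm.trans hAA) k) k
    rw [Matrix.diagonal_apply_eq] at this
    rw [← this]
    simp [Matrix.mul_apply, sq, mul_comm]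
  have hcolU : ∀ k, ∑ j, U j k ^ 2 = 1 := by
    intro k
    have := congrFun (congrFun hU1 k) k
    rw [Matrix.one_apply_eq] at this
    rw [← this]
    simp [Matrix.mul_apply, Matrix.star_eq_conjTranspose, Matrix.conjTranspose_apply, sq]
  have hcolB : ∀ k, ∑ j, (B * U) j k ^ 2 ≤ specNorm B ^ 2 := by
    intro k
    have h := my_mulVec_sq_le B (fun i => U i k)
    have he : ∀ j, (B *ᵥ fun i => U i k) j = (B * U) j k := by
      intro j; simp [Matrix.mulVec, dotProduct, Matrix.mul_apply]
    simp only [he] at h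
    calc ∑ j, (B * U) j k ^ 2 ≤ specNorm B ^ 2 * ∑ j, U j k ^ 2 := h
      _ = specNorm B ^ 2 := by rw [hcolU k, mul_one]
  have hterm : ∀ k, ∑ j, (A * U) j k * (B * U) j k ≤ μ k * specNorm B := by
    intro k
    have hcs := Finset.sum_mul_sq_le_sq_mul_sq Finset.univ
      (fun j => (A * U) j k) (fun j => (B * U) j k)
    rw [hcolA k] at hcs
    have h2 : (∑ j, (A * U) j k * (B * U) j k) ^ 2 ≤ (μ k * specNorm B) ^ 2 := by
      calc (∑ j, (A * U) j k * (B * U) j k) ^ 2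
          ≤ μ k ^ 2 * ∑ j, (B * U) j k ^ 2 := hcs
        _ ≤ μ k ^ 2 * specNorm B ^ 2 := by
            exact mul_le_mul_of_nonneg_left (hcolB k) (sq_nonneg _)
        _ = (μ k * specNorm B) ^ 2 := (mul_pow _ _ _).symm
    nlinarith [mul_nonneg (hμ k) (my_specNorm_nonneg B)]
  calc tin A B = ∑ k, ∑ j, (A * U) j k * (B * U) j k := htin
    _ ≤ ∑ k, μ k * specNorm B := Finset.sum_le_sum fun k _ => hterm k
    _ = nucNorm A * specNorm B := by rw [← Finset.sum_mul, hnuc]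

/-- There is a dual matrix attaining the nuclear norm. -/
lemma my_exists_dual (A : Matrix ι κ ℝ) :
    ∃ Dm : Matrix ι κ ℝ, specNorm Dm ≤ 1 ∧ tin A Dm = nucNorm A := by
  classical
  obtain ⟨U, μ, hU1, hU2, hμ, hnuc, hAA⟩ := my_svd_package A
  have hsT : star U = Uᵀ := by
    rw [Matrix.star_eq_conjTranspose, Matrix.conjTranspose_eq_transpose_of_trivial]
  have hcan : ∀ X : Matrix κ κ ℝ, star U * (U * X) = X := fun X => by
    rw [← Matrix.mul_assoc, hU1, Matrix.one_mul]
  have hcan' : ∀ X : Matrix κ κ ℝ, U * (star U * X) = X := fun X => by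
    rw [← Matrix.mul_assoc, hU2, Matrix.one_mul]
  set g : κ → ℝ := fun k => if μ k = 0 then 0 else (μ k)⁻¹ with hg
  set M : Matrix κ κ ℝ := U * Matrix.diagonal g * star U with hM
  clear_value M
  set Dm : Matrix ι κ ℝ := A * M with hDm
  clear_value Dm
  have hMT : Mᵀ = M := by
    rw [hM, hsT]
    simp [Matrix.transpose_mul, Matrix.mul_assoc]
  have hAAU : Aᵀ * A = U * Matrix.diagonal (fun k => μ k ^ 2) * star U := by
    rw [← hAA]
    simp only [Matrix.mul_assoc, hU2, Matrix.mul_one, hcan']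
  have htin : tin A Dm = nucNorm A := by
    have h1 : Aᵀ * Dm = (Aᵀ * A) * M := by rw [hDm, Matrix.mul_assoc]
    have h2 : (Aᵀ * A) * M =
        U * (Matrix.diagonal (fun k => μ k ^ 2) * Matrix.diagonal g) * star U := by
      rw [hAAU, hM]
      simp only [Matrix.mul_assoc, hcan]
    rw [tin, h1, h2, Matrix.diagonal_mul_diagonal, Matrix.trace_mul_cycle,
      hU1, Matrix.one_mul, Matrix.trace_diagonal, hnuc]
    apply Finset.sum_congr rfl
    intro k _
    by_cases h : μ k = 0
    · simp [hg, h]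
    · field_simp [hg, h]
      simp [hg, h]
  set e : κ → ℝ := fun k => g k * (μ k ^ 2 * g k) with he
  have hDD : Dmᵀ * Dm = U * Matrix.diagonal e * star U := by
    have h1 : Dmᵀ * Dm = M * ((Aᵀ * A) * M) := by
      rw [hDm, Matrix.transpose_mul, hMT, Matrix.mul_assoc, ← Matrix.mul_assoc Aᵀ A M]
    rw [h1, hAAU, hM]
    simp only [Matrix.mul_assoc, hcan]
    rw [← Matrix.mul_assoc (Matrix.diagonal (fun k => μ k ^ 2)) (Matrix.diagonal g) (star U),
      Matrix.diagonal_mul_diagonal,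
      ← Matrix.mul_assoc (Matrix.diagonal g), Matrix.diagonal_mul_diagonal]
  have hspec : specNorm Dm ≤ 1 := by
    apply ContinuousLinearMap.opNorm_le_bound _ zero_le_one
    intro x
    set v : κ → ℝ := WithLp.equiv 2 (κ → ℝ) x with hv
    have hfx : ‖LinearMap.toContinuousLinearMap (Matrix.toEuclideanLin Dm) x‖
        = Real.sqrt (∑ i, (Dm *ᵥ v) i ^ 2) := by
      rw [LinearMap.coe_toContinuousLinearMap', Matrix.toEuclideanLin_apply,
        EuclideanSpace.norm_eq]
      simp [sq_abs]
      rfl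
    have hx : ‖x‖ = Real.sqrt (∑ j, v j ^ 2) := by
      rw [EuclideanSpace.norm_eq]
      simp [hv, sq_abs]
    rw [hfx, hx, one_mul]
    apply Real.sqrt_le_sqrt
    set y : κ → ℝ := v ᵥ* U with hy
    have hyv : Uᵀ *ᵥ v = y := Matrix.mulVec_transpose U v
    have hsum1 : ∑ i, (Dm *ᵥ v) i ^ 2 = ∑ k, y k * (e k * y k) := by
      have e1 : ∑ i, (Dm *ᵥ v) i ^ 2 = (Dm *ᵥ v) ⬝ᵥ (Dm *ᵥ v) := by
        simp [dotProduct, sq]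
      have e2 : v ⬝ᵥ ((Dmᵀ * Dm) *ᵥ v) = (Dm *ᵥ v) ⬝ᵥ (Dm *ᵥ v) := by
        rw [← Matrix.mulVec_mulVec, Matrix.dotProduct_mulVec v Dmᵀ, Matrix.vecMul_transpose]
      rw [e1, ← e2, hDD, ← Matrix.mulVec_mulVec, ← Matrix.mulVec_mulVec,
        Matrix.dotProduct_mulVec, hsT, hyv]
      simp [dotProduct, Matrix.mulVec_diagonal, hy]
    have hsum2 : ∑ k, y k ^ 2 = ∑ j, v j ^ 2 := by
      have e1 : ∑ k, y k ^ 2 = v ⬝ᵥ (U *ᵥ y) := by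
        rw [Matrix.dotProduct_mulVec, hy]
        simp [dotProduct, sq]
      have e2 : U *ᵥ y = v := by
        rw [← hyv, Matrix.mulVec_mulVec, ← hsT, hU2, Matrix.one_mulVec]
      rw [e1, e2]
      simp [dotProduct, sq]
    calc ∑ i, (Dm *ᵥ v) i ^ 2 = ∑ k, y k * (e k * y k) := hsum1
      _ ≤ ∑ k, y k ^ 2 := by
          apply Finset.sum_le_sum
          intro k _
          by_cases h : μ k = 0
          · simp [he, hg, h, sq_nonneg]
          · have : e k = 1 := by simp only [he, hg, if_neg h]; field_simp
            rw [this, one_mul, sq]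
      _ = ∑ j, v j ^ 2 := hsum2
  exact ⟨Dm, hspec, htin⟩

omit [DecidableEq κ] in
lemma my_tin_add_left (A B C : Matrix ι κ ℝ) : tin (A + B) C = tin A C + tin B C := by
  simp [tin, Matrix.transpose_add, Matrix.add_mul]

omit [DecidableEq κ] in
lemma my_tin_neg_right (A B : Matrix ι κ ℝ) : tin A (-B) = -tin A B := by
  simp [tin, Matrix.mul_neg]

omit [DecidableEq κ] in
lemma my_tin_smul_right (c : ℝ) (A B : Matrix ι κ ℝ) : tin A (c • B) = c * tin A B := by
  simp [tin, Matrix.mul_smul]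

omit [DecidableEq κ] in
lemma my_tin_sum_right {σ : Type*} (s : Finset σ) (A : Matrix ι κ ℝ)
    (B : σ → Matrix ι κ ℝ) : tin A (∑ i ∈ s, B i) = ∑ i ∈ s, tin A (B i) := by
  simp [tin, Matrix.mul_sum]

/-- Triangle inequality for the nuclear norm. -/
lemma my_nucNorm_add_le (A B : Matrix ι κ ℝ) :
    nucNorm (A + B) ≤ nucNorm A + nucNorm B := by
  obtain ⟨Dm, h1, h2⟩ := my_exists_dual (A + B)
  have h3 : tin (A + B) Dm = tin A Dm + tin B Dm := my_tin_add_left A B Dm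
  have hA := my_tin_le A Dm
  have hB := my_tin_le B Dm
  have hnA := my_nucNorm_nonneg A
  have hnB := my_nucNorm_nonneg B
  nlinarith [my_specNorm_nonneg Dm]

/-- Lower bound for the trace pairing: `-nucNorm A * specNorm B ≤ tin A B`. -/
lemma my_tin_ge (A B : Matrix ι κ ℝ) (hB : specNorm B ≤ 1) :
    -nucNorm A ≤ tin A B := by
  have h := my_tin_le A (-B)
  rw [my_specNorm_neg, my_tin_neg_right] at h
  have := my_nucNorm_nonneg A
  nlinarith [my_specNorm_nonneg B]

end Aux

theorem stmt12 {N m n : ℕ} (hN : 0 < N)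
    (V D : Fin N → Matrix (Fin m) (Fin n) ℝ)
    (hD : ∀ i, specNorm (D i) ≤ 1)
    (hVD : ∀ i, tin (V i) (D i) = nucNorm (V i)) :
    ∀ G : Matrix (Fin m) (Fin n) ℝ,
      -tin ((N : ℝ)⁻¹ • ∑ i, V i) ((N : ℝ)⁻¹ • ∑ i, D i)
        ≤ -nucNorm G + nucNorm (G - (N : ℝ)⁻¹ • ∑ i, V i)
          + 2 / (N : ℝ) * ∑ i, nucNorm (((N : ℝ)⁻¹ • ∑ j, V j) - V i) := by
  intro G
  have hNpos : (0 : ℝ) < N := by exact_mod_cast hN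
  set Vb : Matrix (Fin m) (Fin n) ℝ := (N : ℝ)⁻¹ • ∑ i, V i with hVb
  have key : ∀ i, nucNorm G - nucNorm (G - Vb) - 2 * nucNorm (Vb - V i)
      ≤ tin Vb (D i) := by
    intro i
    have t1 : tin Vb (D i) = tin (V i) (D i) + tin (Vb - V i) (D i) := by
      rw [← my_tin_add_left]
      congr 1
      abel
    have t2 : -nucNorm (Vb - V i) ≤ tin (Vb - V i) (D i) := my_tin_ge _ _ (hD i)
    have t3 : nucNorm Vb ≤ nucNorm (V i) + nucNorm (Vb - V i) := by
      have h := my_nucNorm_add_le (V i) (Vb - V i)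
      rwa [add_sub_cancel] at h
    have t4 : nucNorm G ≤ nucNorm Vb + nucNorm (G - Vb) := by
      have h := my_nucNorm_add_le Vb (G - Vb)
      rwa [add_sub_cancel] at h
    rw [t1, hVD i]
    linarith
  set T : ℝ := ∑ i, tin Vb (D i) with hT
  set S : ℝ := ∑ i, nucNorm (Vb - V i) with hS
  have hsum : tin Vb ((N : ℝ)⁻¹ • ∑ i, D i) = (N : ℝ)⁻¹ * T := by
    rw [my_tin_smul_right, my_tin_sum_right]
  have hTlow : (N : ℝ) * (nucNorm G - nucNorm (G - Vb)) - 2 * S ≤ T := by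
    have h := Finset.sum_le_sum (fun i (_ : i ∈ Finset.univ) => key i)
    have hl : ∑ _i : Fin N, (nucNorm G - nucNorm (G - Vb)) - 2 * S
        = ∑ i : Fin N, (nucNorm G - nucNorm (G - Vb) - 2 * nucNorm (Vb - V i)) := by
      rw [hS, Finset.mul_sum, ← Finset.sum_sub_distrib]
    have hc : ∑ _i : Fin N, (nucNorm G - nucNorm (G - Vb))
        = (N : ℝ) * (nucNorm G - nucNorm (G - Vb)) := by
      rw [Finset.sum_const, Finset.card_univ, Fintype.card_fin, nsmul_eq_mul]
    calc (N : ℝ) * (nucNorm G - nucNorm (G - Vb)) - 2 * S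
        = ∑ _i : Fin N, (nucNorm G - nucNorm (G - Vb)) - 2 * S := by rw [hc]
      _ = ∑ i : Fin N, (nucNorm G - nucNorm (G - Vb) - 2 * nucNorm (Vb - V i)) := hl
      _ ≤ T := h
  have hNN : (N : ℝ)⁻¹ * (N : ℝ) = 1 := inv_mul_cancel₀ (ne_of_gt hNpos)
  have h5 := mul_le_mul_of_nonneg_left hTlow (le_of_lt (inv_pos.mpr hNpos))
  have h6 : nucNorm G - nucNorm (G - Vb) - (N : ℝ)⁻¹ * (2 * S) ≤ (N : ℝ)⁻¹ * T := by
    rw [mul_sub, ← mul_assoc, hNN, one_mul] at h5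
    linarith
  rw [hsum, div_eq_mul_inv]
  have h2S : 2 * (N : ℝ)⁻¹ * S = (N : ℝ)⁻¹ * (2 * S) := by ring
  rw [h2S]
  linarith
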